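/- Integral boxed subdifferentiability: let f: ℤⁿ → ℤ ∪ {+∞} be an integer-valued integrally convex function, x ∈ dom f, and B = {p ∈ ℝⁿ : α ≤ p ≤ β} an integral box with α ∈ (ℤ ∪ {-∞})ⁿ, β ∈ (ℤ ∪ {+∞})ⁿ, α ≤ β. If ∂f(x) ∩ B ≠ ∅, then ∂f(x) ∩ B ∩ ℤⁿ ≠ ∅. -/

import Mathlib

open scoped BigOperators

/-- The integral neighborhood N(u) = {z ∈ ℤⁿ : |uᵢ − zᵢ| < 1 for all i}. -/
def intNbhd {n : ℕ} (u : Fin n → ℝ) : Set (Fin n → ℤ) :=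
  {z | ∀ i, |u i - (z i : ℝ)| < 1}

/-- The local convex extension f̃(u): the infimum of convex combinations
Σ λ_z f(z) over points z of the integral neighborhood N(u) whose convex
combination with the weights λ equals u.  (It is +∞ when no such
combination exists.) -/
noncomputable def localConvexExt {n : ℕ} (f : (Fin n → ℤ) → EReal)
    (u : Fin n → ℝ) : EReal :=
  sInf { v : EReal | ∃ (t : Finset (Fin n → ℤ)) (lam : (Fin n → ℤ) → ℝ),
    (∀ z ∈ t, z ∈ intNbhd u) ∧ (∀ z ∈ t, 0 ≤ lam z) ∧
    (∑ z ∈ t, lam z) = 1 ∧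
    (∀ i, (∑ z ∈ t, lam z * (z i : ℝ)) = u i) ∧
    v = ∑ z ∈ t, (((lam z : ℝ) : EReal) * f z) }

/-- A function f : ℤⁿ → ℝ ∪ {+∞} with nonempty effective domain is
*integrally convex* if its local convex extension satisfies the midpoint
inequality f̃((x+y)/2) ≤ (f(x)+f(y))/2 for all x, y ∈ ℤⁿ with
‖x − y‖∞ ≥ 2 (this is equivalent to convexity of f̃ on ℝⁿ). -/
def IntegrallyConvexFn {n : ℕ} (f : (Fin n → ℤ) → EReal) : Prop :=
  (∃ x, f x ≠ ⊤) ∧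
  ∀ x y : Fin n → ℤ, (∃ i, 2 ≤ |x i - y i|) →
    localConvexExt f (fun i => ((x i + y i : ℤ) : ℝ) / 2) ≤ (f x + f y) / 2

namespace IBS

lemma coe_sum {A : Type*} (s : Finset A) (f : A → ℝ) :
    ((∑ a ∈ s, f a : ℝ) : EReal) = ∑ a ∈ s, ((f a : ℝ) : EReal) := by
  classical
  induction s using Finset.induction with
  | empty => simp
  | insert _ _ h ih => rw [Finset.sum_insert h, Finset.sum_insert h, EReal.coe_add, ih]

lemma two_distrib {p q : ℝ} (hp : 0 ≤ p) (hq : 0 ≤ q) {X : EReal} (hX : X ≠ ⊥) :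
    ((p + q : ℝ) : EReal) * X = (p : EReal) * X + (q : EReal) * X := by
  induction X with
  | bot => exact absurd rfl hX
  | coe x => rw [← EReal.coe_mul, ← EReal.coe_mul, ← EReal.coe_mul, ← EReal.coe_add]; ring_nf
  | top =>
    rcases eq_or_lt_of_le hp with hp0 | hp0
    · rcases eq_or_lt_of_le hq with hq0 | hq0
      · simp [← hp0, ← hq0]
      · rw [← hp0, zero_add]
        simp [EReal.coe_mul_top_of_pos hq0]
    · rcases eq_or_lt_of_le hq with hq0 | hq0
      · rw [← hq0, add_zero]
        simp [EReal.coe_mul_top_of_pos hp0, EReal.coe_mul_top_of_pos (by linarith : (0:ℝ) < p)]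
      · rw [EReal.coe_mul_top_of_pos hp0, EReal.coe_mul_top_of_pos hq0,
          EReal.coe_mul_top_of_pos (by linarith)]
        rfl

lemma scalar_pull {A : Type*} (s : Finset A) (r : A → ℝ) (hr : ∀ a ∈ s, 0 ≤ r a)
    {X : EReal} (hX : X ≠ ⊥) :
    ((∑ a ∈ s, r a : ℝ) : EReal) * X = ∑ a ∈ s, ((r a : ℝ) : EReal) * X := by
  classical
  induction s using Finset.induction with
  | empty => simp
  | @insert a s ha ih =>
    rw [Finset.sum_insert ha, Finset.sum_insert ha,
      two_distrib (hr a (Finset.mem_insert_self a s))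
        (Finset.sum_nonneg fun b hb => hr b (Finset.mem_insert_of_mem hb)) hX,
      ih (fun b hb => hr b (Finset.mem_insert_of_mem hb))]

lemma half_le_half {r s : ℝ} {X Y : EReal} (h1 : (r : EReal) ≤ X) (h2 : (s : EReal) ≤ Y) :
    (((r + s) / 2 : ℝ) : EReal) ≤ (X + Y) / 2 := by
  have h : ((r + s : ℝ) : EReal) ≤ X + Y := by
    rw [EReal.coe_add]; exact add_le_add h1 h2
  calc (((r + s) / 2 : ℝ) : EReal) = ((r + s : ℝ) : EReal) / ((2:ℝ):EReal) := by
        rw [← EReal.coe_div]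
    _ = ((r + s : ℝ) : EReal) / (2:EReal) := by norm_cast
    _ ≤ (X + Y) / 2 := EReal.div_le_div_right_of_nonneg (by norm_num) h

lemma coe_le_half {c : ℝ} {Z : EReal} (h : (c : EReal) ≤ Z / 2) :
    ((2 * c : ℝ) : EReal) ≤ Z := by
  rw [EReal.le_div_iff_mul_le (by norm_num) (by
    rw [show (2:EReal) = ((2:ℝ):EReal) by norm_cast]; simp)] at h
  calc ((2 * c : ℝ) : EReal) = (c : EReal) * ((2:ℝ) : EReal) := by
        rw [← EReal.coe_mul]; ring_nf
    _ = (c : EReal) * (2 : EReal) := by norm_cast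
    _ ≤ Z := h

lemma half_add_half {X Y : EReal} (hX : X ≠ ⊥) (hY : Y ≠ ⊥) : X / 2 + Y / 2 = (X + Y) / 2 := by
  induction X with
  | bot => exact absurd rfl hX
  | top =>
    rw [EReal.top_add_of_ne_bot hY]
    have ht : (⊤:EReal) / 2 = ⊤ := by
      rw [show (2:EReal) = ((2:ℝ):EReal) by norm_cast]
      exact EReal.top_div_of_pos_ne_top (by norm_num) (by simp)
    rw [ht, EReal.top_add_of_ne_bot]
    intro hc
    rw [show (2:EReal) = ((2:ℝ):EReal) by norm_cast] at hc
    induction Y with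
    | bot => exact hY rfl
    | coe y => rw [← EReal.coe_div] at hc; exact (EReal.coe_ne_bot _) hc
    | top =>
      rw [EReal.top_div_of_pos_ne_top (by norm_num) (by simp)] at hc
      exact (by simp : (⊤:EReal) ≠ ⊥) hc
  | coe x =>
    induction Y with
    | bot => exact absurd rfl hY
    | top =>
      rw [EReal.add_top_of_ne_bot (EReal.coe_ne_bot x)]
      have ht : (⊤:EReal) / 2 = ⊤ := by
        rw [show (2:EReal) = ((2:ℝ):EReal) by norm_cast]
        exact EReal.top_div_of_pos_ne_top (by norm_num) (by simp)
      rw [ht, EReal.add_top_of_ne_bot]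
      rw [show (2:EReal) = ((2:ℝ):EReal) by norm_cast, ← EReal.coe_div]
      exact EReal.coe_ne_bot _
    | coe y =>
      rw [show (2:EReal) = ((2:ℝ):EReal) by norm_cast, ← EReal.coe_add, ← EReal.coe_div,
        ← EReal.coe_div, ← EReal.coe_div, ← EReal.coe_add]
      norm_cast
      ring


lemma lce_lower {n : ℕ} (f : (Fin n → ℤ) → EReal) (u : Fin n → ℝ) (c₀ : ℝ) (Q : Fin n → ℝ)
    (hb : ∀ z ∈ intNbhd u, ((c₀ + ∑ i, Q i * (z i : ℝ) : ℝ) : EReal) ≤ f z) :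
    ((c₀ + ∑ i, Q i * u i : ℝ) : EReal) ≤ localConvexExt f u := by
  apply le_sInf
  rintro v ⟨t, lam, hN, h0, h1, hbar, rfl⟩
  have hterm : ∀ z ∈ t, ((lam z * (c₀ + ∑ i, Q i * (z i : ℝ)) : ℝ) : EReal)
      ≤ ((lam z : ℝ) : EReal) * f z := by
    intro z hz
    rw [EReal.coe_mul]
    exact mul_le_mul_of_nonneg_left (hb z (hN z hz)) (by exact_mod_cast h0 z hz)
  calc ((c₀ + ∑ i, Q i * u i : ℝ) : EReal)
      = ((∑ z ∈ t, lam z * (c₀ + ∑ i, Q i * (z i : ℝ)) : ℝ) : EReal) := by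
        congr 1
        have : ∀ z ∈ t, lam z * (c₀ + ∑ i, Q i * (z i : ℝ))
            = lam z * c₀ + ∑ i, Q i * (lam z * (z i : ℝ)) := by
          intro z _
          rw [mul_add, Finset.mul_sum]
          congr 1
          exact Finset.sum_congr rfl fun i _ => by ring
        rw [Finset.sum_congr rfl this, Finset.sum_add_distrib, ← Finset.sum_mul, h1, one_mul,
          Finset.sum_comm]
        congr 1
        refine Finset.sum_congr rfl fun i _ => ?_
        rw [← Finset.mul_sum, hbar i]
    _ = ∑ z ∈ t, ((lam z * (c₀ + ∑ i, Q i * (z i : ℝ)) : ℝ) : EReal) := coe_sum _ _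
    _ ≤ ∑ z ∈ t, ((lam z : ℝ) : EReal) * f z := Finset.sum_le_sum hterm

lemma local_to_global {n : ℕ} (f : (Fin n → ℤ) → EReal)
    (hZ : ∀ z, f z = ⊤ ∨ ∃ m : ℤ, f z = ((m : ℝ) : EReal))
    (hmid : ∀ x y : Fin n → ℤ, (∃ i, 2 ≤ |x i - y i|) →
      localConvexExt f (fun i => ((x i + y i : ℤ) : ℝ) / 2) ≤ (f x + f y) / 2)
    (x : Fin n → ℤ) (fxR : ℝ) (hfx : f x = ((fxR : ℝ) : EReal))
    (q : Fin n → ℝ)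
    (hloc : ∀ y : Fin n → ℤ, (∀ i, (y i - x i).natAbs ≤ 1) →
      (((∑ i, q i * ((y i - x i : ℤ) : ℝ)) : ℝ) : EReal) + f x ≤ f y) :
    ∀ y : Fin n → ℤ, (((∑ i, q i * ((y i - x i : ℤ) : ℝ)) : ℝ) : EReal) + f x ≤ f y := by
  have main : ∀ K : ℕ, ∀ y : Fin n → ℤ, (Finset.univ.sup (fun i => (y i - x i).natAbs)) ≤ K →
      (((∑ i, q i * ((y i - x i : ℤ) : ℝ)) : ℝ) : EReal) + f x ≤ f y := by
    intro K
    induction K using Nat.strong_induction_on with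
    | _ K ih =>
      intro y hsup
      by_cases hK1 : Finset.univ.sup (fun i => (y i - x i).natAbs) ≤ 1
      · exact hloc y fun i => le_trans (Finset.le_sup (f := fun i => (y i - x i).natAbs) (Finset.mem_univ i)) hK1
      · -- sup ≥ 2
        set M : ℕ := Finset.univ.sup (fun i => (y i - x i).natAbs) with hM
        have hM2 : 2 ≤ M := by omega
        have hne : Nonempty (Fin n) := by
          by_contra h
          have : Finset.univ (α := Fin n) = ∅ := by
            simp [Finset.univ_eq_empty_iff.mpr (not_nonempty_iff.mp h)]
          rw [hM, this] at hK1; simp at hK1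
        obtain ⟨k, _, hk⟩ := Finset.exists_mem_eq_sup (Finset.univ (α := Fin n))
          (Finset.univ_nonempty) (fun i => (y i - x i).natAbs)
        have hgap : 2 ≤ |x k - y k| := by
          have : (y k - x k).natAbs = M := hk.symm
          have h2 : 2 ≤ (y k - x k).natAbs := by omega
          rw [abs_sub_comm, Int.abs_eq_natAbs]
          exact_mod_cast h2
        have hstep := hmid x y ⟨k, hgap⟩
        -- lower bound for lce via ih
        set S : ℝ := ∑ i, q i * ((y i - x i : ℤ) : ℝ) with hS
        set u : Fin n → ℝ := fun i => ((x i + y i : ℤ) : ℝ) / 2 with hu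
        have hzb : ∀ z ∈ intNbhd u, ∀ i, (z i - x i).natAbs ≤ M - 1 := by
          intro z hz i
          have h1 : |u i - (z i : ℝ)| < 1 := hz i
          have h2 : ((y i - x i).natAbs : ℝ) ≤ (M : ℝ) := by
            exact_mod_cast Finset.le_sup (f := fun i => (y i - x i).natAbs) (Finset.mem_univ i)
          have hyx : |((y i : ℝ)) - (x i : ℝ)| ≤ (M : ℝ) := by
            rw [show ((y i : ℝ)) - (x i : ℝ) = ((y i - x i : ℤ) : ℝ) by push_cast; ring,
              ← Int.cast_abs, Int.abs_eq_natAbs]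
            exact_mod_cast h2
          have hux : |u i - (x i : ℝ)| ≤ (M : ℝ) / 2 := by
            rw [hu]
            have : ((x i + y i : ℤ) : ℝ) / 2 - (x i : ℝ) = ((y i : ℝ) - (x i : ℝ)) / 2 := by
              push_cast; ring
            rw [this, abs_div]
            simp only [abs_two]
            linarith [hyx, abs_nonneg ((y i : ℝ) - (x i : ℝ))]
          have : |((z i : ℝ)) - (x i : ℝ)| < (M : ℝ) := by
            have htri : |((z i : ℝ)) - (x i : ℝ)| ≤ |(z i : ℝ) - u i| + |u i - (x i : ℝ)| := by
              have := abs_sub_le ((z i : ℝ)) (u i) ((x i : ℝ))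
              linarith [this]
            rw [abs_sub_comm ((z i : ℝ)) (u i)] at htri
            have hM2' : (2 : ℝ) ≤ (M : ℝ) := by exact_mod_cast hM2
            linarith
          have : ((z i - x i).natAbs : ℝ) < (M : ℝ) := by
            rw [Nat.cast_natAbs, Int.cast_abs,
              show ((z i - x i : ℤ) : ℝ) = (z i : ℝ) - (x i : ℝ) by push_cast; ring]
            exact this
          have : (z i - x i).natAbs < M := by exact_mod_cast this
          omega
        have hlb : ((fxR - (∑ i, q i * (x i : ℝ)) + ∑ i, q i * u i : ℝ) : EReal)
            ≤ localConvexExt f u := by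
          apply lce_lower
          intro z hz
          have hzi := ih (M - 1) (by omega) z (Finset.sup_le fun i _ => hzb z hz i)
          rw [hfx] at hzi
          have : ((fxR - (∑ i, q i * (x i : ℝ)) + ∑ i, q i * (z i : ℝ) : ℝ) : EReal)
              = (((∑ i, q i * ((z i - x i : ℤ) : ℝ)) : ℝ) : EReal) + ((fxR : ℝ) : EReal) := by
            rw [← EReal.coe_add]
            congr 1
            have e : ∀ i ∈ Finset.univ, q i * ((z i - x i : ℤ) : ℝ)
                = q i * (z i : ℝ) - q i * (x i : ℝ) := fun i _ => by push_cast; ring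
            rw [Finset.sum_congr rfl e, Finset.sum_sub_distrib]
            ring
          rw [this]
          exact hzi
        have hval : fxR - (∑ i, q i * (x i : ℝ)) + ∑ i, q i * u i = fxR + S / 2 := by
          rw [hu, hS]
          have : ∀ i ∈ Finset.univ, q i * (((x i + y i : ℤ) : ℝ) / 2)
              = q i * (x i : ℝ) + (q i * ((y i - x i : ℤ) : ℝ)) / 2 := by
            intro i _; push_cast; ring
          rw [Finset.sum_congr rfl this, Finset.sum_add_distrib, ← Finset.sum_div]
          ring
        rw [hval] at hlb
        have hchain : ((fxR + S / 2 : ℝ) : EReal) ≤ (f x + f y) / 2 := le_trans hlb hstep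
        rcases hZ y with hy | ⟨m, hy⟩
        · rw [hy]; exact le_top
        · rw [hy, hfx] at hchain ⊢
          have hre : fxR + S / 2 ≤ (fxR + ((m:ℤ):ℝ)) / 2 := by
            rw [show ((fxR:ℝ):EReal) + (((m:ℤ):ℝ):EReal) = ((fxR + ((m:ℤ):ℝ) : ℝ) : EReal) by
                norm_cast,
              show (2:EReal) = ((2:ℝ):EReal) by norm_cast, ← EReal.coe_div] at hchain
            exact_mod_cast hchain
          have hfin : S + fxR ≤ ((m:ℤ):ℝ) := by linarith
          rw [← EReal.coe_add]
          exact_mod_cast hfin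
  intro y
  exact main (Finset.univ.sup (fun i => (y i - x i).natAbs)) y le_rfl

lemma add_ne_bot' {X Y : EReal} (hX : X ≠ ⊥) (hY : Y ≠ ⊥) : X + Y ≠ ⊥ := by
  intro h
  rcases EReal.add_eq_bot_iff.mp h with h1 | h1
  exacts [hX h1, hY h1]

lemma top_div_two : (⊤ : EReal) / 2 = ⊤ := by
  rw [show (2:EReal) = ((2:ℝ):EReal) by norm_cast]
  exact EReal.top_div_of_pos_ne_top (by norm_num) (by simp)

lemma mul_add_coe {l r : ℝ} (hl : 0 ≤ l) {X : EReal} (hX : X ≠ ⊥) :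
    ((l : ℝ) : EReal) * (X + ((r : ℝ) : EReal)) = ((l : ℝ) : EReal) * X + ((l * r : ℝ) : EReal) := by
  induction X with
  | bot => exact absurd rfl hX
  | coe x => rw [← EReal.coe_add, ← EReal.coe_mul, ← EReal.coe_mul, ← EReal.coe_add]; ring_nf
  | top =>
    rcases eq_or_lt_of_le hl with h0 | h0
    · rw [← h0]; simp
    · rw [EReal.top_add_of_ne_bot (EReal.coe_ne_bot r), EReal.coe_mul_top_of_pos h0,
        EReal.top_add_of_ne_bot (EReal.coe_ne_bot _)]

lemma le_add_coe_iff {c : ℝ} {X v : EReal} : X ≤ v + ((c:ℝ):EReal) ↔ X + ((-c:ℝ):EReal) ≤ v := by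
  constructor
  · intro h
    have := add_le_add_left h ((-c:ℝ):EReal)
    rwa [add_assoc, ← EReal.coe_add, show c + -c = 0 by ring, EReal.coe_zero, add_zero] at this
  · intro h
    have := add_le_add_left h ((c:ℝ):EReal)
    rwa [add_assoc, ← EReal.coe_add, show -c + c = 0 by ring, EReal.coe_zero, add_zero] at this

lemma le_sInf_add_coe {S : Set EReal} {X : EReal} {c : ℝ}
    (h : ∀ v ∈ S, X ≤ v + ((c:ℝ):EReal)) : X ≤ sInf S + ((c:ℝ):EReal) := by
  rw [le_add_coe_iff]
  exact le_sInf fun v hv => le_add_coe_iff.mp (h v hv)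

/-- The penalty function. -/
noncomputable def pen (x₀ : ℤ) (a b : EReal) (s : ℤ) : EReal :=
  if x₀ < s then a * (((s - x₀ : ℤ) : ℝ) : EReal)
  else if s < x₀ then b * (((x₀ - s : ℤ) : ℝ) : EReal)
  else 0

lemma pen_self (x₀ : ℤ) (a b : EReal) : pen x₀ a b x₀ = 0 := by simp [pen]

lemma pen_ne_bot {x₀ : ℤ} {a b : EReal} (ha : a ≠ ⊥) (hb : b ≠ ⊥) (s : ℤ) :
    pen x₀ a b s ≠ ⊥ := by
  unfold pen
  split_ifs with h1 h2
  · induction a with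
    | bot => exact absurd rfl ha
    | coe x => rw [← EReal.coe_mul]; exact EReal.coe_ne_bot _
    | top =>
      rw [EReal.top_mul_coe_of_pos (by exact_mod_cast Int.sub_pos.mpr h1)]
      simp
  · induction b with
    | bot => exact absurd rfl hb
    | coe x => rw [← EReal.coe_mul]; exact EReal.coe_ne_bot _
    | top =>
      rw [EReal.top_mul_coe_of_pos (by exact_mod_cast Int.sub_pos.mpr h2)]
      simp
  · simp

lemma pen_int_or_top {x₀ : ℤ} {a b : EReal}
    (ha : a = ⊤ ∨ ∃ k : ℤ, a = ((k : ℝ) : EReal))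
    (hb : b = ⊤ ∨ ∃ k : ℤ, b = ((k : ℝ) : EReal)) (s : ℤ) :
    pen x₀ a b s = ⊤ ∨ ∃ k : ℤ, pen x₀ a b s = ((k : ℝ) : EReal) := by
  unfold pen
  split_ifs with h1 h2
  · rcases ha with rfl | ⟨k, rfl⟩
    · exact Or.inl (EReal.top_mul_coe_of_pos (by exact_mod_cast Int.sub_pos.mpr h1))
    · exact Or.inr ⟨k * (s - x₀), by rw [← EReal.coe_mul]; push_cast; ring_nf⟩
  · rcases hb with rfl | ⟨k, rfl⟩
    · exact Or.inl (EReal.top_mul_coe_of_pos (by exact_mod_cast Int.sub_pos.mpr h2))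
    · exact Or.inr ⟨k * (x₀ - s), by rw [← EReal.coe_mul]; push_cast; ring_nf⟩
  · exact Or.inr ⟨0, by simp⟩

lemma neg_le_of_add_nonneg {k : ℤ} {b : EReal} (hab : 0 ≤ ((k:ℝ):EReal) + b) :
    (((-k : ℤ) : ℝ) : EReal) ≤ b := by
  have h1 : (((-k:ℤ):ℝ) : EReal) + 0 ≤ (((-k:ℤ):ℝ) : EReal) + (((k:ℝ):EReal) + b) :=
    add_le_add_right hab _
  rwa [add_zero, ← add_assoc, ← EReal.coe_add, show ((-k:ℤ):ℝ) + (k:ℝ) = 0 by push_cast; ring,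
    EReal.coe_zero, zero_add] at h1

lemma pen_minorant {x₀ : ℤ} {a b : EReal} {p₀ : ℝ}
    (hpa : ((-p₀ : ℝ) : EReal) ≤ a) (hpb : ((p₀ : ℝ) : EReal) ≤ b) (s : ℤ) :
    ((-p₀ * ((s - x₀ : ℤ) : ℝ) : ℝ) : EReal) ≤ pen x₀ a b s := by
  unfold pen
  split_ifs with h1 h2
  · rw [EReal.coe_mul]
    exact mul_le_mul_of_nonneg_right hpa (by exact_mod_cast (Int.sub_pos.mpr h1).le)
  · rw [show (-p₀ * ((s - x₀ : ℤ) : ℝ) : ℝ) = p₀ * ((x₀ - s : ℤ) : ℝ) by push_cast; ring,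
      EReal.coe_mul]
    exact mul_le_mul_of_nonneg_right hpb (by exact_mod_cast (Int.sub_pos.mpr h2).le)
  · have hs : s = x₀ := le_antisymm (not_lt.mp h1) (not_lt.mp h2)
    simp [hs]

lemma pen_eq_affine_right {x₀ : ℤ} {a b : EReal} {k : ℤ} (hak : a = ((k : ℝ) : EReal))
    {s : ℤ} (hs : x₀ ≤ s) :
    pen x₀ a b s = (((k : ℝ) * ((s - x₀ : ℤ) : ℝ) : ℝ) : EReal) := by
  unfold pen
  split_ifs with h1 h2
  · rw [hak, ← EReal.coe_mul]
  · omega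
  · have : s = x₀ := by omega
    simp [this]

lemma pen_eq_affine_left {x₀ : ℤ} {a b : EReal} {k : ℤ} (hbk : b = ((k : ℝ) : EReal))
    {s : ℤ} (hs : s ≤ x₀) :
    pen x₀ a b s = (((-k : ℝ) * ((s - x₀ : ℤ) : ℝ) : ℝ) : EReal) := by
  unfold pen
  split_ifs with h1 h2
  · omega
  · rw [hbk, ← EReal.coe_mul]
    congr 1
    push_cast
    ring
  · have : s = x₀ := by omega
    simp [this]

lemma pen_ge_affine_right {x₀ : ℤ} {a b : EReal} {k : ℤ} (hak : a = ((k : ℝ) : EReal))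
    (hab : 0 ≤ a + b) (s : ℤ) :
    (((k : ℝ) * ((s - x₀ : ℤ) : ℝ) : ℝ) : EReal) ≤ pen x₀ a b s := by
  by_cases hs : x₀ ≤ s
  · rw [pen_eq_affine_right hak hs]
  · push_neg at hs
    unfold pen
    rw [if_neg (by omega), if_pos hs]
    have hb' : (((-k : ℤ) : ℝ) : EReal) ≤ b := neg_le_of_add_nonneg (by rwa [hak] at hab)
    rw [show ((k : ℝ) * ((s - x₀ : ℤ) : ℝ) : ℝ) = ((-k:ℤ):ℝ) * ((x₀ - s : ℤ) : ℝ) by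
      push_cast; ring, EReal.coe_mul]
    exact mul_le_mul_of_nonneg_right hb' (by exact_mod_cast (Int.sub_pos.mpr hs).le)

lemma pen_ge_affine_left {x₀ : ℤ} {a b : EReal} {k : ℤ} (hbk : b = ((k : ℝ) : EReal))
    (hab : 0 ≤ a + b) (s : ℤ) :
    (((-k : ℝ) * ((s - x₀ : ℤ) : ℝ) : ℝ) : EReal) ≤ pen x₀ a b s := by
  by_cases hs : s ≤ x₀
  · rw [pen_eq_affine_left hbk hs]
  · push_neg at hs
    unfold pen
    rw [if_pos hs]
    have ha' : (((-k : ℤ) : ℝ) : EReal) ≤ a := by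
      apply neg_le_of_add_nonneg
      rwa [hbk, add_comm] at hab
    rw [show ((-k : ℝ) * ((s - x₀ : ℤ) : ℝ) : ℝ) = ((-k:ℤ):ℝ) * ((s - x₀ : ℤ) : ℝ) by
      push_cast; ring, EReal.coe_mul]
    exact mul_le_mul_of_nonneg_right ha' (by exact_mod_cast (Int.sub_pos.mpr hs).le)

lemma pen_top_cases {x₀ : ℤ} {a b : EReal} {s : ℤ}
    (ha : a = ⊤ ∨ ∃ k : ℤ, a = ((k : ℝ) : EReal))
    (hb : b = ⊤ ∨ ∃ k : ℤ, b = ((k : ℝ) : EReal))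
    (h : pen x₀ a b s = ⊤) : (x₀ < s ∧ a = ⊤) ∨ (s < x₀ ∧ b = ⊤) := by
  unfold pen at h
  split_ifs at h with h1 h2
  · left
    refine ⟨h1, ?_⟩
    rcases ha with rfl | ⟨k, rfl⟩
    · rfl
    · rw [← EReal.coe_mul] at h
      exact absurd h (EReal.coe_ne_top _)
  · right
    refine ⟨h2, ?_⟩
    rcases hb with rfl | ⟨k, rfl⟩
    · rfl
    · rw [← EReal.coe_mul] at h
      exact absurd h (EReal.coe_ne_top _)
  · simp at h

lemma pen_sum_nonneg {x₀ : ℤ} {a b : EReal} (ha : a ≠ ⊥) (hb : b ≠ ⊥) (hab : 0 ≤ a + b)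
    {s t : ℤ} (hst : s + t = 2 * x₀) : 0 ≤ pen x₀ a b s + pen x₀ a b t := by
  rcases lt_trichotomy s x₀ with hs | hs | hs
  · have ht : x₀ < t := by omega
    have h1 : pen x₀ a b s = b * (((x₀ - s : ℤ) : ℝ) : EReal) := by
      unfold pen; rw [if_neg (by omega), if_pos hs]
    have h2 : pen x₀ a b t = a * (((t - x₀ : ℤ) : ℝ) : EReal) := by
      unfold pen; rw [if_pos ht]
    have hT : ((t - x₀ : ℤ) : ℝ) = ((x₀ - s : ℤ) : ℝ) := by
      exact_mod_cast congrArg (Int.cast : ℤ → ℝ) (by omega : t - x₀ = x₀ - s)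
    have hTpos : (0:ℝ) < ((x₀ - s : ℤ) : ℝ) := by exact_mod_cast Int.sub_pos.mpr hs
    rw [h1, h2, hT, add_comm]
    induction a with
    | bot => exact absurd rfl ha
    | top =>
      rw [EReal.top_mul_coe_of_pos hTpos, EReal.top_add_of_ne_bot]
      · exact le_top
      · induction b with
        | bot => exact absurd rfl hb
        | coe y => rw [← EReal.coe_mul]; exact EReal.coe_ne_bot _
        | top => rw [EReal.top_mul_coe_of_pos hTpos]; simp
    | coe ka =>
      induction b with
      | bot => exact absurd rfl hb
      | top =>
        rw [EReal.top_mul_coe_of_pos hTpos, EReal.add_top_of_ne_bot]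
        · exact le_top
        · rw [← EReal.coe_mul]; exact EReal.coe_ne_bot _
      | coe kb =>
        rw [← EReal.coe_mul, ← EReal.coe_mul, ← EReal.coe_add]
        have hs0 : (0:ℝ) ≤ ka + kb := by
          have := hab
          rw [← EReal.coe_add] at this
          exact_mod_cast this
        have : (0:ℝ) ≤ ka * ((x₀ - s : ℤ) : ℝ) + kb * ((x₀ - s : ℤ) : ℝ) := by nlinarith
        exact_mod_cast this
  · have ht : t = x₀ := by omega
    subst hs ht
    simp [pen_self]
  · have ht : t < x₀ := by omega
    have h1 : pen x₀ a b s = a * (((s - x₀ : ℤ) : ℝ) : EReal) := by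
      unfold pen; rw [if_pos hs]
    have h2 : pen x₀ a b t = b * (((x₀ - t : ℤ) : ℝ) : EReal) := by
      unfold pen; rw [if_neg (by omega), if_pos ht]
    have hT : ((x₀ - t : ℤ) : ℝ) = ((s - x₀ : ℤ) : ℝ) := by
      exact_mod_cast congrArg (Int.cast : ℤ → ℝ) (by omega : x₀ - t = s - x₀)
    have hTpos : (0:ℝ) < ((s - x₀ : ℤ) : ℝ) := by exact_mod_cast Int.sub_pos.mpr hs
    rw [h1, h2, hT]
    induction a with
    | bot => exact absurd rfl ha
    | top =>
      rw [EReal.top_mul_coe_of_pos hTpos, EReal.top_add_of_ne_bot]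
      · exact le_top
      · induction b with
        | bot => exact absurd rfl hb
        | coe y => rw [← EReal.coe_mul]; exact EReal.coe_ne_bot _
        | top => rw [EReal.top_mul_coe_of_pos hTpos]; simp
    | coe ka =>
      induction b with
      | bot => exact absurd rfl hb
      | top =>
        rw [EReal.top_mul_coe_of_pos hTpos, EReal.add_top_of_ne_bot]
        · exact le_top
        · rw [← EReal.coe_mul]; exact EReal.coe_ne_bot _
      | coe kb =>
        rw [← EReal.coe_mul, ← EReal.coe_mul, ← EReal.coe_add]
        have hs0 : (0:ℝ) ≤ ka + kb := by
          have := hab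
          rw [← EReal.coe_add] at this
          exact_mod_cast this
        have : (0:ℝ) ≤ ka * ((s - x₀ : ℤ) : ℝ) + kb * ((s - x₀ : ℤ) : ℝ) := by nlinarith
        exact_mod_cast this

lemma penalty_mid {m : ℕ} (f : (Fin (m+1) → ℤ) → EReal) (hbot : ∀ z, f z ≠ ⊥)
    (hmid : ∀ u v : Fin (m+1) → ℤ, (∃ i, 2 ≤ |u i - v i|) →
      localConvexExt f (fun i => ((u i + v i : ℤ) : ℝ) / 2) ≤ (f u + f v) / 2)
    (x₀ : ℤ) (a b : EReal)
    (ha : a = ⊤ ∨ ∃ k : ℤ, a = ((k : ℝ) : EReal))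
    (hb : b = ⊤ ∨ ∃ k : ℤ, b = ((k : ℝ) : EReal)) (hab : 0 ≤ a + b) :
    ∀ u v : Fin (m+1) → ℤ, (∃ i, 2 ≤ |u i - v i|) →
      localConvexExt (fun z => f z + pen x₀ a b (z (Fin.last m)))
          (fun i => ((u i + v i : ℤ) : ℝ) / 2)
        ≤ ((f u + pen x₀ a b (u (Fin.last m))) + (f v + pen x₀ a b (v (Fin.last m)))) / 2 := by
  have ha' : a ≠ ⊥ := by rcases ha with rfl | ⟨k, rfl⟩ <;> simp
  have hb' : b ≠ ⊥ := by rcases hb with rfl | ⟨k, rfl⟩ <;> simp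
  intro u v hgap
  set un : ℤ := u (Fin.last m) with hun
  set vn : ℤ := v (Fin.last m) with hvn
  set midr : ℝ := ((un + vn : ℤ) : ℝ) / 2 with hmidr
  have hbot_h : ∀ z : Fin (m+1) → ℤ, f z + pen x₀ a b (z (Fin.last m)) ≠ ⊥ :=
    fun z => add_ne_bot' (hbot z) (pen_ne_bot ha' hb' _)
  by_cases hTop : ∃ s : ℤ, |midr - (s : ℝ)| < 1 ∧ pen x₀ a b s = ⊤
  · -- RHS is ⊤
    obtain ⟨s, hs1, hs2⟩ := hTop
    have hPuv : pen x₀ a b un = ⊤ ∨ pen x₀ a b vn = ⊤ := by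
      rcases pen_top_cases ha hb hs2 with ⟨hlt, hA⟩ | ⟨hlt, hB⟩
      · have hsM : s ≤ max un vn := by
          have h1 : (s : ℝ) < midr + 1 := by
            have := abs_lt.mp hs1
            linarith [this.1]
          have h2 : midr ≤ ((max un vn : ℤ) : ℝ) := by
            rw [hmidr]
            have b1 : (un : ℝ) ≤ ((max un vn : ℤ) : ℝ) := by exact_mod_cast le_max_left un vn
            have b2 : (vn : ℝ) ≤ ((max un vn : ℤ) : ℝ) := by exact_mod_cast le_max_right un vn
            push_cast
            push_cast at b1 b2
            linarith
          have : (s : ℝ) < ((max un vn : ℤ) : ℝ) + 1 := by linarith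
          exact_mod_cast Int.lt_add_one_iff.mp (by exact_mod_cast this)
        have hM : x₀ < max un vn := lt_of_lt_of_le hlt hsM
        rcases le_total vn un with hcmp | hcmp
        · left
          have hmx : max un vn = un := max_eq_left hcmp
          rw [← hmx]
          unfold pen
          rw [if_pos hM, hA]
          exact EReal.top_mul_coe_of_pos (by exact_mod_cast Int.sub_pos.mpr hM)
        · right
          have hmx : max un vn = vn := max_eq_right hcmp
          rw [← hmx]
          unfold pen
          rw [if_pos hM, hA]
          exact EReal.top_mul_coe_of_pos (by exact_mod_cast Int.sub_pos.mpr hM)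
      · have hsM : min un vn ≤ s := by
          have h1 : midr - 1 < (s : ℝ) := by
            have := abs_lt.mp hs1
            linarith [this.2]
          have h2 : ((min un vn : ℤ) : ℝ) ≤ midr := by
            rw [hmidr]
            have b1 : ((min un vn : ℤ) : ℝ) ≤ (un : ℝ) := by exact_mod_cast min_le_left un vn
            have b2 : ((min un vn : ℤ) : ℝ) ≤ (vn : ℝ) := by exact_mod_cast min_le_right un vn
            push_cast
            push_cast at b1 b2
            linarith
          have : ((min un vn : ℤ) : ℝ) < (s : ℝ) + 1 := by linarith
          exact_mod_cast Int.lt_add_one_iff.mp (by exact_mod_cast this)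
        have hM : min un vn < x₀ := lt_of_le_of_lt hsM hlt
        rcases le_total un vn with hcmp | hcmp
        · left
          have hmx : min un vn = un := min_eq_left hcmp
          rw [← hmx]
          unfold pen
          rw [if_neg (by omega), if_pos hM, hB]
          exact EReal.top_mul_coe_of_pos (by exact_mod_cast Int.sub_pos.mpr hM)
        · right
          have hmx : min un vn = vn := min_eq_right hcmp
          rw [← hmx]
          unfold pen
          rw [if_neg (by omega), if_pos hM, hB]
          exact EReal.top_mul_coe_of_pos (by exact_mod_cast Int.sub_pos.mpr hM)
    have hRHS : (f u + pen x₀ a b un) + (f v + pen x₀ a b vn) = ⊤ := by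
      rcases hPuv with h | h
      · rw [h, EReal.add_top_of_ne_bot (hbot u), EReal.top_add_of_ne_bot (hbot_h v)]
      · rw [h, EReal.add_top_of_ne_bot (hbot v), EReal.add_top_of_ne_bot (hbot_h u)]
    rw [hRHS, top_div_two]
    exact le_top
  · push_neg at hTop
    have key : ∀ A : ℝ,
        (∀ s : ℤ, |midr - (s : ℝ)| < 1 →
          pen x₀ a b s = ((A * ((s : ℝ) - (x₀ : ℝ)) : ℝ) : EReal)) →
        (((A * (midr - (x₀ : ℝ)) : ℝ) : EReal) ≤ (pen x₀ a b un + pen x₀ a b vn) / 2) →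
        localConvexExt (fun z => f z + pen x₀ a b (z (Fin.last m)))
            (fun i => ((u i + v i : ℤ) : ℝ) / 2)
          ≤ ((f u + pen x₀ a b un) + (f v + pen x₀ a b vn)) / 2 := by
      intro A h1 h2
      set c : ℝ := A * (midr - (x₀ : ℝ)) with hc
      have step1 : localConvexExt (fun z => f z + pen x₀ a b (z (Fin.last m)))
          (fun i => ((u i + v i : ℤ) : ℝ) / 2)
          ≤ localConvexExt f (fun i => ((u i + v i : ℤ) : ℝ) / 2) + ((c : ℝ) : EReal) := by
        apply le_sInf_add_coe
        rintro w ⟨t, lam, hN, h0, hsum1, hbar, rfl⟩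
        apply sInf_le
        refine ⟨t, lam, hN, h0, hsum1, hbar, ?_⟩
        have hz_last : ∀ z ∈ t, pen x₀ a b (z (Fin.last m))
            = ((A * ((z (Fin.last m) : ℝ) - (x₀ : ℝ)) : ℝ) : EReal) := by
          intro z hz
          exact h1 _ (hN z hz (Fin.last m))
        calc ∑ z ∈ t, ((lam z : ℝ) : EReal) * f z + ((c : ℝ) : EReal)
            = ∑ z ∈ t, (((lam z : ℝ) : EReal) * f z
                + ((lam z * (A * ((z (Fin.last m) : ℝ) - (x₀ : ℝ))) : ℝ) : EReal)) := by
              rw [Finset.sum_add_distrib]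
              congr 1
              rw [← coe_sum]
              congr 1
              have expand : ∀ z ∈ t, lam z * (A * ((z (Fin.last m) : ℝ) - (x₀ : ℝ)))
                  = A * (lam z * (z (Fin.last m) : ℝ)) - (A * (x₀ : ℝ)) * lam z := by
                intro z _; ring
              rw [Finset.sum_congr rfl expand, Finset.sum_sub_distrib, ← Finset.mul_sum,
                ← Finset.mul_sum, hbar (Fin.last m), hsum1, hc, hmidr]
              push_cast
              ring
          _ = ∑ z ∈ t, ((lam z : ℝ) : EReal) * (f z + pen x₀ a b (z (Fin.last m))) := by
              refine Finset.sum_congr rfl fun z hz => ?_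
              rw [hz_last z hz, mul_add_coe (h0 z hz) (hbot z)]
      have step2 := hmid u v hgap
      have efin : (f u + f v) / 2 + (pen x₀ a b un + pen x₀ a b vn) / 2
          = ((f u + pen x₀ a b un) + (f v + pen x₀ a b vn)) / 2 := by
        rw [half_add_half (add_ne_bot' (hbot u) (hbot v))
          (add_ne_bot' (pen_ne_bot ha' hb' _) (pen_ne_bot ha' hb' _)), add_add_add_comm]
      refine le_trans step1 (le_trans (add_le_add_left step2 _)
        (le_trans (add_le_add_right h2 _) (le_of_eq efin)))
    rcases lt_trichotomy (un + vn) (2 * x₀) with hw | hw | hw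
    · -- b side: all achievable points are ≤ x₀
      have hmidb : midr ≤ (x₀ : ℝ) - 1/2 := by
        rw [hmidr]
        have : ((un + vn : ℤ) : ℝ) ≤ ((2 * x₀ - 1 : ℤ) : ℝ) := by exact_mod_cast by omega
        push_cast at this ⊢
        linarith
      have hbk : ∃ k : ℤ, b = ((k : ℝ) : EReal) := by
        rcases hb with rfl | hk
        · exfalso
          set s₀ : ℤ := (un + vn) / 2 with hs₀
          have hs₀x : s₀ < x₀ := by omega
          have hach : |midr - (s₀ : ℝ)| < 1 := by
            have hc : ((un + vn : ℤ) : ℝ) = 2 * (s₀ : ℝ)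
                ∨ ((un + vn : ℤ) : ℝ) = 2 * (s₀ : ℝ) + 1 := by
              have hpar : un + vn = 2 * s₀ ∨ un + vn = 2 * s₀ + 1 := by omega
              rcases hpar with h | h
              · left; exact_mod_cast h
              · right; exact_mod_cast h
            rw [hmidr]
            rcases hc with hc | hc <;> rw [hc, abs_lt] <;> constructor <;> linarith
          apply hTop _ hach
          unfold pen
          rw [if_neg (by omega), if_pos hs₀x]
          exact EReal.top_mul_coe_of_pos (by exact_mod_cast Int.sub_pos.mpr hs₀x)
        · exact hk
      obtain ⟨kb, hbk⟩ := hbk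
      apply key (-(kb : ℝ))
      · intro s hsach
        have hs_le : s ≤ x₀ := by
          have h1 : (s : ℝ) < midr + 1 := by
            have := abs_lt.mp hsach
            linarith [this.1]
          have : (s : ℝ) < (x₀ : ℝ) + 1/2 := by linarith
          have : (s : ℝ) < (x₀ : ℝ) + 1 := by linarith
          exact_mod_cast Int.lt_add_one_iff.mp (by exact_mod_cast this)
        rw [pen_eq_affine_left hbk hs_le]
        congr 1
        push_cast
        ring
      · have g1 := pen_ge_affine_left (x₀ := x₀) hbk hab un
        have g2 := pen_ge_affine_left (x₀ := x₀) hbk hab vn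
        have e : (-(kb:ℝ)) * (midr - (x₀:ℝ)) = ((-kb : ℝ) * ((un - x₀ : ℤ) : ℝ)
            + (-kb : ℝ) * ((vn - x₀ : ℤ) : ℝ)) / 2 := by
          rw [hmidr]; push_cast; ring
        rw [e]
        exact half_le_half g1 g2
    · -- middle: midr = x₀
      have hmide : midr = (x₀ : ℝ) := by
        rw [hmidr]
        have : ((un + vn : ℤ) : ℝ) = ((2 * x₀ : ℤ) : ℝ) := by exact_mod_cast hw
        push_cast at this ⊢
        linarith
      apply key 0
      · intro s hsach
        have hs_eq : s = x₀ := by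
          rw [hmide] at hsach
          have := abs_lt.mp hsach
          have h1 : (x₀ : ℝ) - (s:ℝ) < 1 := by linarith [this.2]
          have h2 : (s:ℝ) - (x₀ : ℝ) < 1 := by linarith [this.1]
          have i1 : ((x₀ - s : ℤ) : ℝ) < 1 := by push_cast; linarith
          have i2 : ((s - x₀ : ℤ) : ℝ) < 1 := by push_cast; linarith
          have j1 : x₀ - s < 1 := by exact_mod_cast i1
          have j2 : s - x₀ < 1 := by exact_mod_cast i2
          omega
        rw [hs_eq, pen_self]
        norm_num
      · rw [show (0:ℝ) * (midr - (x₀:ℝ)) = 0 by ring, EReal.coe_zero]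
        exact EReal.div_nonneg (pen_sum_nonneg ha' hb' hab hw) (by norm_num)
    · -- a side: all achievable points are ≥ x₀
      have hmida : (x₀ : ℝ) + 1/2 ≤ midr := by
        rw [hmidr]
        have : ((2 * x₀ + 1 : ℤ) : ℝ) ≤ ((un + vn : ℤ) : ℝ) := by exact_mod_cast by omega
        push_cast at this ⊢
        linarith
      have hak : ∃ k : ℤ, a = ((k : ℝ) : EReal) := by
        rcases ha with rfl | hk
        · exfalso
          set s₀ : ℤ := (un + vn + 1) / 2 with hs₀
          have hs₀x : x₀ < s₀ := by omega
          have hach : |midr - (s₀ : ℝ)| < 1 := by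
            have hc : ((un + vn : ℤ) : ℝ) = 2 * (s₀ : ℝ)
                ∨ ((un + vn : ℤ) : ℝ) = 2 * (s₀ : ℝ) - 1 := by
              have hpar : un + vn = 2 * s₀ ∨ un + vn = 2 * s₀ - 1 := by omega
              rcases hpar with h | h
              · left; exact_mod_cast h
              · right; exact_mod_cast h
            rw [hmidr]
            rcases hc with hc | hc <;> rw [hc, abs_lt] <;> constructor <;> linarith
          apply hTop _ hach
          unfold pen
          rw [if_pos hs₀x]
          exact EReal.top_mul_coe_of_pos (by exact_mod_cast Int.sub_pos.mpr hs₀x)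
        · exact hk
      obtain ⟨ka, hak⟩ := hak
      apply key (ka : ℝ)
      · intro s hsach
        have hs_ge : x₀ ≤ s := by
          have h1 : midr - 1 < (s : ℝ) := by
            have := abs_lt.mp hsach
            linarith [this.2]
          have : (x₀ : ℝ) - 1/2 < (s : ℝ) := by linarith
          have : (x₀ : ℝ) < (s : ℝ) + 1 := by linarith
          have : x₀ < s + 1 := by exact_mod_cast this
          omega
        rw [pen_eq_affine_right hak hs_ge]
        congr 1
        push_cast
        ring
      · have g1 := pen_ge_affine_right (x₀ := x₀) hak hab un
        have g2 := pen_ge_affine_right (x₀ := x₀) hak hab vn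
        have e : (ka:ℝ) * (midr - (x₀:ℝ)) = ((ka : ℝ) * ((un - x₀ : ℤ) : ℝ)
            + (ka : ℝ) * ((vn - x₀ : ℤ) : ℝ)) / 2 := by
          rw [hmidr]; push_cast; ring
        rw [e]
        exact half_le_half g1 g2

lemma inf_attained (H : ℤ → EReal)
    (hZ : ∀ s, H s = ⊤ ∨ ∃ k : ℤ, H s = ((k : ℝ) : EReal))
    (r : ℝ) (hlb : ∀ s, ((r : ℝ) : EReal) ≤ H s) :
    ∃ s₀ : ℤ, (⨅ s : ℤ, H s) = H s₀ := by
  by_cases hfin : ∃ s, ∃ k : ℤ, H s = ((k : ℝ) : EReal)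
  · have hbdd : ∃ b : ℤ, ∀ k : ℤ, (∃ s, H s = ((k : ℝ) : EReal)) → b ≤ k := by
      refine ⟨⌈r⌉, fun k ⟨s, hs⟩ => ?_⟩
      have := hlb s
      rw [hs] at this
      have : r ≤ (k : ℝ) := by exact_mod_cast this
      exact Int.ceil_le.mpr this
    obtain ⟨k₀, ⟨s₀, hs₀⟩, hmin⟩ := Int.exists_least_of_bdd hbdd
      (by obtain ⟨s, k, hk⟩ := hfin; exact ⟨k, s, hk⟩)
    refine ⟨s₀, le_antisymm (iInf_le _ _) (le_iInf fun s => ?_)⟩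
    rw [hs₀]
    rcases hZ s with h | ⟨k, hk⟩
    · rw [h]; exact le_top
    · rw [hk]
      have : k₀ ≤ k := hmin k ⟨s, hk⟩
      exact_mod_cast this
  · push_neg at hfin
    have htop : ∀ s, H s = ⊤ := by
      intro s
      rcases hZ s with h | ⟨k, hk⟩
      · exact h
      · exact absurd hk (hfin s k)
    refine ⟨0, le_antisymm (iInf_le _ _) (le_iInf fun s => ?_)⟩
    rw [htop 0, htop s]

lemma proj_mid {m : ℕ} (H : (Fin (m+1) → ℤ) → EReal)
    (hmidH : ∀ u v : Fin (m+1) → ℤ, (∃ i, 2 ≤ |u i - v i|) →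
      localConvexExt H (fun i => ((u i + v i : ℤ) : ℝ) / 2) ≤ (H u + H v) / 2)
    (g : (Fin m → ℤ) → EReal) (hg : ∀ y', g y' = ⨅ s : ℤ, H (Fin.snoc y' s))
    (hgbot : ∀ y', g y' ≠ ⊥)
    (hatt : ∀ y', ∃ s, g y' = H (Fin.snoc y' s)) :
    ∀ u' v' : Fin m → ℤ, (∃ i, 2 ≤ |u' i - v' i|) →
      localConvexExt g (fun i => ((u' i + v' i : ℤ) : ℝ) / 2) ≤ (g u' + g v') / 2 := by
  classical
  intro u' v' hgap'
  obtain ⟨i, hi⟩ := hgap'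
  obtain ⟨s, hs⟩ := hatt u'
  obtain ⟨t, ht⟩ := hatt v'
  set U : Fin (m+1) → ℤ := Fin.snoc u' s with hU
  set V : Fin (m+1) → ℤ := Fin.snoc v' t with hV
  have hgap : ∃ j, 2 ≤ |U j - V j| := by
    refine ⟨i.castSucc, ?_⟩
    rw [hU, hV, Fin.snoc_castSucc, Fin.snoc_castSucc]
    exact hi
  have h1 := hmidH U V hgap
  have h2 : localConvexExt g (fun i => ((u' i + v' i : ℤ) : ℝ) / 2)
      ≤ localConvexExt H (fun i => ((U i + V i : ℤ) : ℝ) / 2) := by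
    apply le_sInf
    rintro w ⟨T, lam, hN, h0, hsum1, hbar, rfl⟩
    set T' : Finset (Fin m → ℤ) := T.image Fin.init with hT'
    set lam' : (Fin m → ℤ) → ℝ :=
      fun w' => ∑ z ∈ T.filter (fun z => Fin.init z = w'), lam z with hlam'
    have hUV : ∀ j : Fin m, ((U j.castSucc + V j.castSucc : ℤ) : ℝ) / 2
        = ((u' j + v' j : ℤ) : ℝ) / 2 := by
      intro j
      rw [hU, hV, Fin.snoc_castSucc, Fin.snoc_castSucc]
    have hmem : localConvexExt g (fun i => ((u' i + v' i : ℤ) : ℝ) / 2)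
        ≤ ∑ w' ∈ T', ((lam' w' : ℝ) : EReal) * g w' := by
      apply sInf_le
      refine ⟨T', lam', ?_, ?_, ?_, ?_, rfl⟩
      · intro w' hw'
        obtain ⟨z, hz, rfl⟩ := Finset.mem_image.mp hw'
        intro j
        have h := hN z hz j.castSucc
        simp only at h
        show |((u' j + v' j : ℤ) : ℝ) / 2 - ((Fin.init z j : ℤ) : ℝ)| < 1
        rw [← hUV j]
        exact h
      · intro w' _
        exact Finset.sum_nonneg fun z hz => h0 z (Finset.mem_filter.mp hz).1
      · rw [hT', hlam', Finset.sum_fiberwise_eq_sum_filter,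
          Finset.filter_true_of_mem (fun z hz => Finset.mem_image_of_mem _ hz)]
        exact hsum1
      · intro j
        have e1 : ∀ w' ∈ T', lam' w' * ((w' j : ℤ) : ℝ)
            = ∑ z ∈ T.filter (fun z => Fin.init z = w'), lam z * ((z j.castSucc : ℤ) : ℝ) := by
          intro w' _
          rw [hlam', Finset.sum_mul]
          refine Finset.sum_congr rfl fun z hz => ?_
          have hz' : Fin.init z = w' := (Finset.mem_filter.mp hz).2
          rw [← hz']
          rfl
        rw [Finset.sum_congr rfl e1, Finset.sum_fiberwise_eq_sum_filter,
          Finset.filter_true_of_mem (fun z hz => Finset.mem_image_of_mem _ hz), hbar j.castSucc]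
        exact (hUV j)
    have hle : ∑ w' ∈ T', ((lam' w' : ℝ) : EReal) * g w'
        ≤ ∑ z ∈ T, ((lam z : ℝ) : EReal) * H z := by
      have e2 : ∀ w' ∈ T', ((lam' w' : ℝ) : EReal) * g w'
          ≤ ∑ z ∈ T.filter (fun z => Fin.init z = w'), ((lam z : ℝ) : EReal) * H z := by
        intro w' _
        rw [hlam', scalar_pull _ _ (fun z hz => h0 z (Finset.mem_filter.mp hz).1) (hgbot w')]
        refine Finset.sum_le_sum fun z hz => ?_
        have hz' : Fin.init z = w' := (Finset.mem_filter.mp hz).2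
        have hgle : g w' ≤ H z := by
          rw [hg w']
          have : H (Fin.snoc w' (z (Fin.last m))) = H z := by
            rw [← hz', Fin.snoc_init_self]
          rw [← this]
          exact iInf_le _ _
        exact mul_le_mul_of_nonneg_left hgle
          (by exact_mod_cast h0 z (Finset.mem_filter.mp hz).1)
      calc ∑ w' ∈ T', ((lam' w' : ℝ) : EReal) * g w'
          ≤ ∑ w' ∈ T', ∑ z ∈ T.filter (fun z => Fin.init z = w'),
              ((lam z : ℝ) : EReal) * H z := Finset.sum_le_sum e2
        _ = ∑ z ∈ T, ((lam z : ℝ) : EReal) * H z := by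
            rw [Finset.sum_fiberwise_eq_sum_filter,
              Finset.filter_true_of_mem (fun z hz => Finset.mem_image_of_mem _ hz)]
    exact le_trans hmem hle
  rw [hs, ht]
  exact le_trans h2 h1

/-- predicate: bottom or an integer -/
def PB (X : EReal) : Prop := X = ⊥ ∨ ∃ k : ℤ, X = ((k : ℝ) : EReal)

/-- predicate: top or an integer -/
def PT (X : EReal) : Prop := X = ⊤ ∨ ∃ k : ℤ, X = ((k : ℝ) : EReal)

lemma PB_sup {X Y : EReal} (hX : PB X) (hY : PB Y) : PB (X ⊔ Y) := by
  rcases hX with rfl | ⟨k, rfl⟩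
  · rwa [bot_sup_eq]
  · rcases hY with rfl | ⟨l, rfl⟩
    · rw [sup_bot_eq]; exact Or.inr ⟨k, rfl⟩
    · rcases le_total ((k : ℝ) : EReal) ((l : ℝ) : EReal) with h | h
      · rw [sup_eq_right.mpr h]; exact Or.inr ⟨l, rfl⟩
      · rw [sup_eq_left.mpr h]; exact Or.inr ⟨k, rfl⟩

lemma PT_inf {X Y : EReal} (hX : PT X) (hY : PT Y) : PT (X ⊓ Y) := by
  rcases hX with rfl | ⟨k, rfl⟩
  · rwa [top_inf_eq]
  · rcases hY with rfl | ⟨l, rfl⟩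
    · rw [inf_top_eq]; exact Or.inr ⟨k, rfl⟩
    · rcases le_total ((k : ℝ) : EReal) ((l : ℝ) : EReal) with h | h
      · rw [inf_eq_left.mpr h]; exact Or.inr ⟨k, rfl⟩
      · rw [inf_eq_right.mpr h]; exact Or.inr ⟨l, rfl⟩

lemma exists_int_between {L U : EReal} (hL : PB L) (hU : PT U) (hLU : L ≤ U) :
    ∃ k : ℤ, L ≤ ((k : ℝ) : EReal) ∧ ((k : ℝ) : EReal) ≤ U := by
  rcases hL with rfl | ⟨k, rfl⟩
  · rcases hU with rfl | ⟨l, rfl⟩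
    · exact ⟨0, bot_le, le_top⟩
    · exact ⟨l, bot_le, le_refl _⟩
  · exact ⟨k, le_refl _, hLU⟩

lemma coe_sub_le {c d : ℝ} {X : EReal} (h : ((c : ℝ) : EReal) ≤ X + ((d : ℝ) : EReal)) :
    ((c : ℝ) : EReal) - X ≤ ((d : ℝ) : EReal) := by
  induction X with
  | bot =>
    rw [show ((c:ℝ):EReal) - ⊥ = ⊤ by rw [sub_eq_add_neg, EReal.neg_bot,
      EReal.add_top_of_ne_bot (EReal.coe_ne_bot c)]]
    simp at h
  | top => simp
  | coe x =>
    rw [← EReal.coe_add] at h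
    rw [← EReal.coe_sub]
    have : c ≤ x + d := by exact_mod_cast h
    have : c - x ≤ d := by linarith
    exact_mod_cast this

/-- encoding of {-1,0,1}-vectors -/
def emb {m : ℕ} (d : Fin m → Fin 3) : Fin m → ℤ := fun j => (d j : ℤ) - 1

lemma emb_range {m : ℕ} (d : Fin m → Fin 3) (j : Fin m) : (emb d j).natAbs ≤ 1 := by
  have := (d j).isLt
  unfold emb
  omega

lemma emb_surj {m : ℕ} (d' : Fin m → ℤ) (h : ∀ j, (d' j).natAbs ≤ 1) :
    ∃ d : Fin m → Fin 3, emb d = d' := by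
  refine ⟨fun j => ⟨(d' j + 1).toNat, by have := h j; omega⟩, funext fun j => ?_⟩
  unfold emb
  have := h j
  simp only
  omega

lemma pen_right_one (x₀ : ℤ) (a b : EReal) : pen x₀ a b (x₀ + 1) = a := by
  unfold pen
  rw [if_pos (by omega)]
  rw [show ((x₀ + 1 - x₀ : ℤ) : ℝ) = 1 by push_cast; ring]
  norm_num

lemma pen_left_one (x₀ : ℤ) (a b : EReal) : pen x₀ a b (x₀ - 1) = b := by
  unfold pen
  rw [if_neg (by omega), if_pos (by omega)]
  rw [show ((x₀ - (x₀ - 1) : ℤ) : ℝ) = 1 by push_cast; ring]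
  norm_num

lemma int_close {w s : ℤ} (h : |((w : ℤ) : ℝ) - (s : ℝ)| < 1) : s = w := by
  have h1 : ((w - s : ℤ) : ℝ) < 1 := by push_cast; cases abs_lt.mp h; linarith
  have h2 : ((s - w : ℤ) : ℝ) < 1 := by push_cast; cases abs_lt.mp h; linarith
  have j1 : w - s < 1 := by exact_mod_cast h1
  have j2 : s - w < 1 := by exact_mod_cast h2
  omega

lemma main_ind : ∀ (n : ℕ) (f : (Fin n → ℤ) → EReal)
    (_hZ : ∀ z, f z = ⊤ ∨ ∃ k : ℤ, f z = ((k : ℝ) : EReal))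
    (_hmid : ∀ u v : Fin n → ℤ, (∃ i, 2 ≤ |u i - v i|) →
      localConvexExt f (fun i => ((u i + v i : ℤ) : ℝ) / 2) ≤ (f u + f v) / 2)
    (x : Fin n → ℤ) (kx : ℤ) (_hfx : f x = (((kx : ℤ) : ℝ) : EReal))
    (α β : Fin n → EReal)
    (_hα : ∀ i, α i = ⊥ ∨ ∃ k : ℤ, α i = ((k : ℝ) : EReal))
    (_hβ : ∀ i, β i = ⊤ ∨ ∃ k : ℤ, β i = ((k : ℝ) : EReal))
    (_hαβ : ∀ i, α i ≤ β i)
    (p : Fin n → ℝ)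
    (_hp : ∀ y, (((∑ i, p i * ((y i - x i : ℤ) : ℝ)) : ℝ) : EReal) + f x ≤ f y)
    (_hpbox : ∀ i, α i ≤ ((p i : ℝ) : EReal) ∧ ((p i : ℝ) : EReal) ≤ β i),
    ∃ q : Fin n → ℤ,
      (∀ y, (((∑ i, (q i : ℝ) * ((y i - x i : ℤ) : ℝ)) : ℝ) : EReal) + f x ≤ f y)
      ∧ (∀ i, α i ≤ (((q i : ℤ) : ℝ) : EReal) ∧ (((q i : ℤ) : ℝ) : EReal) ≤ β i) := by
  intro n
  induction n with
  | zero =>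
    intro f hZ hmid x kx hfx α β hα hβ hαβ p hp hpbox
    refine ⟨fun _ => 0, fun y => ?_, fun i => i.elim0⟩
    have hyx : y = x := funext fun i => i.elim0
    rw [hyx, show (∑ i : Fin 0, ((0:ℤ) : ℝ) * ((x i - x i : ℤ) : ℝ)) = 0 from
      Finset.sum_empty, EReal.coe_zero, zero_add]
  | succ m IH =>
    intro f hZ hmid x kx hfx α β hα hβ hαβ p hp hpbox
    classical
    set ln := Fin.last m with hln
    set x₀ : ℤ := x ln with hx₀
    set kxr : ℝ := ((kx : ℤ) : ℝ) with hkxr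
    set x' : Fin m → ℤ := Fin.init x with hx'
    set a : EReal := -(α ln) with haa
    set b : EReal := β ln with hbb
    have ha3 : a = ⊤ ∨ ∃ k : ℤ, a = ((k : ℝ) : EReal) := by
      rcases hα ln with h | ⟨k, h⟩
      · left; rw [haa, h, EReal.neg_bot]
      · right
        exact ⟨-k, by rw [haa, h, show ((-k : ℤ) : ℝ) = -(k:ℝ) by push_cast; ring,
          EReal.coe_neg]⟩
    have hb3 : b = ⊤ ∨ ∃ k : ℤ, b = ((k : ℝ) : EReal) := by
      rcases hβ ln with h | ⟨k, h⟩
      · left; rw [hbb, h]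
      · right; exact ⟨k, by rw [hbb, h]⟩
    have ha' : a ≠ ⊥ := by rcases ha3 with h | ⟨k, h⟩ <;> simp [h]
    have hb' : b ≠ ⊥ := by rcases hb3 with h | ⟨k, h⟩ <;> simp [h]
    have hbotf : ∀ z, f z ≠ ⊥ := by
      intro z
      rcases hZ z with h | ⟨k, h⟩ <;> simp [h]
    have hab : 0 ≤ a + b := by
      rcases hα ln with h | ⟨k, h⟩
      · rw [haa, h, EReal.neg_bot, EReal.top_add_of_ne_bot hb']
        exact le_top
      · rcases hβ ln with h2 | ⟨l, h2⟩
        · rw [hbb, h2, EReal.add_top_of_ne_bot ha']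
          exact le_top
        · have hkl : (k : ℝ) ≤ (l : ℝ) := by
            have := hαβ ln
            rw [h, h2] at this
            exact_mod_cast this
          rw [haa, hbb, h, h2, ← EReal.coe_neg, ← EReal.coe_add]
          have : (0:ℝ) ≤ -(k:ℝ) + l := by linarith
          exact_mod_cast this
    set H : (Fin (m+1) → ℤ) → EReal := fun z => f z + pen x₀ a b (z ln) with hH
    have hbotH : ∀ z, H z ≠ ⊥ := fun z => add_ne_bot' (hbotf z) (pen_ne_bot ha' hb' _)
    have hZH : ∀ z, H z = ⊤ ∨ ∃ k : ℤ, H z = ((k : ℝ) : EReal) := by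
      intro z
      rcases hZ z with h | ⟨k, h⟩
      · left; rw [hH]; simp only; rw [h, EReal.top_add_of_ne_bot (pen_ne_bot ha' hb' _)]
      · rcases pen_int_or_top (x₀ := x₀) ha3 hb3 (z ln) with h2 | ⟨l, h2⟩
        · left; rw [hH]; simp only; rw [h2, EReal.add_top_of_ne_bot (hbotf z)]
        · right
          exact ⟨k + l, by rw [hH]; simp only; rw [h, h2, ← EReal.coe_add]; norm_cast⟩
    have hpa : ((-(p ln) : ℝ) : EReal) ≤ a := by
      rw [haa, EReal.coe_neg]
      exact EReal.neg_le_neg_iff.mpr (hpbox ln).1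
    have hpb : ((p ln : ℝ) : EReal) ≤ b := (hpbox ln).2
    have hminor : ∀ z : Fin (m+1) → ℤ,
        ((kxr + ∑ j : Fin m, p j.castSucc * ((z j.castSucc - x j.castSucc : ℤ) : ℝ) : ℝ) : EReal)
          ≤ H z := by
      intro z
      have A := hp z
      rw [hfx, ← EReal.coe_add] at A
      have B := pen_minorant (x₀ := x₀) hpa hpb (z ln)
      have C := add_le_add A B
      rw [← EReal.coe_add] at C
      calc ((kxr + ∑ j : Fin m, p j.castSucc * ((z j.castSucc - x j.castSucc : ℤ) : ℝ) : ℝ) : EReal)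
          = (((∑ i, p i * ((z i - x i : ℤ) : ℝ)) + kxr
              + -(p ln) * ((z ln - x₀ : ℤ) : ℝ) : ℝ) : EReal) := by
            congr 1
            rw [Fin.sum_univ_castSucc (f := fun i => p i * ((z i - x i : ℤ) : ℝ))]
            rw [hx₀]
            ring
        _ ≤ f z + pen x₀ a b (z ln) := C
    set g : (Fin m → ℤ) → EReal := fun y' => ⨅ s : ℤ, H (Fin.snoc y' s) with hg
    have hsnoc_cast : ∀ (y' : Fin m → ℤ) (s : ℤ) (j : Fin m),
        (Fin.snoc y' s : Fin (m+1) → ℤ) j.castSucc = y' j := fun y' s j => Fin.snoc_castSucc _ _ _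
    have hatt : ∀ y', ∃ s, g y' = H (Fin.snoc y' s) := by
      intro y'
      apply inf_attained _ (fun s => hZH _)
        (kxr + ∑ j : Fin m, p j.castSucc * ((y' j - x j.castSucc : ℤ) : ℝ))
      intro s
      have := hminor (Fin.snoc y' s)
      rw [show (∑ j : Fin m, p j.castSucc
          * (((Fin.snoc y' s : Fin (m+1) → ℤ) j.castSucc - x j.castSucc : ℤ) : ℝ))
          = ∑ j : Fin m, p j.castSucc * ((y' j - x j.castSucc : ℤ) : ℝ) by
        refine Finset.sum_congr rfl fun j _ => ?_
        rw [hsnoc_cast]] at this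
      exact this
    have hgbot : ∀ y', g y' ≠ ⊥ := by
      intro y'
      obtain ⟨s, hs⟩ := hatt y'
      rw [hs]
      exact hbotH _
    have hZg : ∀ y', g y' = ⊤ ∨ ∃ k : ℤ, g y' = ((k : ℝ) : EReal) := by
      intro y'
      obtain ⟨s, hs⟩ := hatt y'
      rw [hs]
      exact hZH _
    have hxsnoc : (Fin.snoc x' x₀ : Fin (m+1) → ℤ) = x := by
      rw [hx', hx₀]
      exact Fin.snoc_init_self x
    have hgx : g x' = ((kxr : ℝ) : EReal) := by
      apply le_antisymm
      · have h1 : g x' ≤ H (Fin.snoc x' x₀) := iInf_le _ _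
        rw [hxsnoc] at h1
        rw [hH] at h1
        simp only at h1
        rw [← hx₀, pen_self, add_zero, hfx] at h1
        exact h1
      · apply le_iInf
        intro s
        have := hminor (Fin.snoc x' s)
        rw [show (∑ j : Fin m, p j.castSucc
            * (((Fin.snoc x' s : Fin (m+1) → ℤ) j.castSucc - x j.castSucc : ℤ) : ℝ)) = 0 by
          apply Finset.sum_eq_zero
          intro j _
          rw [hsnoc_cast]
          rw [show x' j - x j.castSucc = 0 from by rw [hx']; exact sub_self _]
          norm_num] at this
        rw [add_zero] at this
        exact this
    have hmidH := penalty_mid f hbotf hmid x₀ a b ha3 hb3 hab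
    have hmidg := proj_mid H hmidH g (fun y' => rfl) hgbot hatt
    have hpg : ∀ y' : Fin m → ℤ,
        (((∑ j, p j.castSucc * ((y' j - x' j : ℤ) : ℝ)) : ℝ) : EReal) + g x' ≤ g y' := by
      intro y'
      rw [hgx, ← EReal.coe_add]
      apply le_iInf
      intro s
      have hmz := hminor (Fin.snoc y' s)
      rw [show (∑ j : Fin m, p j.castSucc
          * (((Fin.snoc y' s : Fin (m+1) → ℤ) j.castSucc - x j.castSucc : ℤ) : ℝ))
          = ∑ j, p j.castSucc * ((y' j - x' j : ℤ) : ℝ) by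
        refine Finset.sum_congr rfl fun j _ => ?_
        rw [hsnoc_cast]
        rfl] at hmz
      rw [show (∑ j, p j.castSucc * ((y' j - x' j : ℤ) : ℝ)) + kxr
        = kxr + ∑ j, p j.castSucc * ((y' j - x' j : ℤ) : ℝ) by ring]
      exact hmz
    obtain ⟨q', hq'g, hq'b⟩ := IH g hZg hmidg x' kx hgx
      (fun j => α j.castSucc) (fun j => β j.castSucc)
      (fun j => hα _) (fun j => hβ _) (fun j => hαβ _)
      (fun j => p j.castSucc) hpg (fun j => hpbox _)
    set SD : (Fin m → ℤ) → ℝ := fun d' => ∑ j, (q' j : ℝ) * ((d' j : ℤ) : ℝ) with hSD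
    have hq'at : ∀ d' : Fin m → ℤ,
        ((SD d' + kxr : ℝ) : EReal) ≤ g (fun j => x' j + d' j) := by
      intro d'
      have h := hq'g (fun j => x' j + d' j)
      rw [hgx, ← EReal.coe_add] at h
      rw [show (∑ i, (q' i : ℝ) * ((((fun j => x' j + d' j) i) - x' i : ℤ) : ℝ)) = SD d' by
        rw [hSD]
        refine Finset.sum_congr rfl fun j _ => ?_
        congr 1
        push_cast
        ring] at h
      exact h
    set P1 : (Fin m → ℤ) → (Fin (m+1) → ℤ) :=
      fun d' => fun i => x i + (Fin.snoc d' (1:ℤ) : Fin (m+1) → ℤ) i with hP1d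
    set Pm1 : (Fin m → ℤ) → (Fin (m+1) → ℤ) :=
      fun d' => fun i => x i + (Fin.snoc d' (-1:ℤ) : Fin (m+1) → ℤ) i with hPm1d
    have hP1ln : ∀ d', P1 d' ln = x₀ + 1 := by
      intro d'
      rw [hP1d]
      simp only
      rw [hln, Fin.snoc_last, hx₀]
    have hPm1ln : ∀ d', Pm1 d' ln = x₀ - 1 := by
      intro d'
      rw [hPm1d]
      simp only
      rw [hln, Fin.snoc_last, hx₀]
      ring
    have hP1c : ∀ d' (j : Fin m), P1 d' j.castSucc = x j.castSucc + d' j := by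
      intro d' j
      rw [hP1d]
      simp only
      rw [Fin.snoc_castSucc]
    have hPm1c : ∀ d' (j : Fin m), Pm1 d' j.castSucc = x j.castSucc + d' j := by
      intro d' j
      rw [hPm1d]
      simp only
      rw [Fin.snoc_castSucc]
    have hP1eq : ∀ d', Fin.snoc (fun j => x' j + d' j) (x₀ + 1) = P1 d' := by
      intro d'
      funext i
      refine Fin.lastCases ?_ (fun j => ?_) i
      · rw [show (Fin.last m) = ln from hln.symm, Fin.snoc_last, hP1ln]
      · rw [Fin.snoc_castSucc, hP1c]
        rfl
    have hPm1eq : ∀ d', Fin.snoc (fun j => x' j + d' j) (x₀ - 1) = Pm1 d' := by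
      intro d'
      funext i
      refine Fin.lastCases ?_ (fun j => ?_) i
      · rw [show (Fin.last m) = ln from hln.symm, Fin.snoc_last, hPm1ln]
      · rw [Fin.snoc_castSucc, hPm1c]
        rfl
    have hgP1 : ∀ d', g (fun j => x' j + d' j) ≤ f (P1 d') + a := by
      intro d'
      have h1 : g (fun j => x' j + d' j)
          ≤ H (Fin.snoc (fun j => x' j + d' j) (x₀ + 1)) := iInf_le _ _
      rw [hP1eq d', hH] at h1
      simp only at h1
      rw [show P1 d' ln = x₀ + 1 from hP1ln d', pen_right_one] at h1
      exact h1
    have hgPm1 : ∀ d', g (fun j => x' j + d' j) ≤ f (Pm1 d') + b := by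
      intro d'
      have h1 : g (fun j => x' j + d' j)
          ≤ H (Fin.snoc (fun j => x' j + d' j) (x₀ - 1)) := iInf_le _ _
      rw [hPm1eq d', hH] at h1
      simp only at h1
      rw [show Pm1 d' ln = x₀ - 1 from hPm1ln d', pen_left_one] at h1
      exact h1
    set Uel : (Fin m → Fin 3) → EReal :=
      fun d => f (P1 (emb d)) + ((-kxr - SD (emb d) : ℝ) : EReal) with hUel
    set Lel : (Fin m → Fin 3) → EReal :=
      fun e => ((SD (emb e) + kxr : ℝ) : EReal) - f (Pm1 (emb e)) with hLel
    have hαU : ∀ d, α ln ≤ Uel d := by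
      intro d
      rcases hα ln with h | ⟨kα, h⟩
      · rw [h]; exact bot_le
      · have chain := le_trans (hq'at (emb d)) (hgP1 (emb d))
        rw [haa, h, ← EReal.coe_neg] at chain
        have h2 := le_add_coe_iff.mp chain
        rw [← EReal.coe_add] at h2
        rw [h, hUel]
        simp only
        calc ((kα : ℝ) : EReal)
            = ((SD (emb d) + kxr + -(-(kα:ℝ)) + (-kxr - SD (emb d)) : ℝ) : EReal) := by
              congr 1
              ring
          _ = ((SD (emb d) + kxr + -(-(kα:ℝ)) : ℝ) : EReal)
              + ((-kxr - SD (emb d) : ℝ) : EReal) := EReal.coe_add _ _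
          _ ≤ f (P1 (emb d)) + ((-kxr - SD (emb d) : ℝ) : EReal) := add_le_add_left h2 _
    have hLβ : ∀ e, Lel e ≤ β ln := by
      intro e
      rcases hβ ln with h | ⟨kβ, h⟩
      · rw [h]; exact le_top
      · have chain := le_trans (hq'at (emb e)) (hgPm1 (emb e))
        rw [hbb, h] at chain
        rw [h, hLel]
        exact coe_sub_le chain
    have hcross : ∀ d e, Lel e ≤ Uel d := by
      intro d e
      have hgap2 : ∃ i, 2 ≤ |P1 (emb d) i - Pm1 (emb e) i| := by
        refine ⟨ln, ?_⟩
        rw [hP1ln, hPm1ln]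
        rw [show x₀ + 1 - (x₀ - 1) = 2 by ring]
        norm_num
      have hstep := hmid (P1 (emb d)) (Pm1 (emb e)) hgap2
      set c₀ : ℝ := kxr - ∑ j, (q' j : ℝ) * ((x' j : ℤ) : ℝ) with hc₀
      set Q : Fin (m+1) → ℝ := Fin.snoc (fun j => (q' j : ℝ)) 0 with hQ
      set mid : Fin (m+1) → ℝ :=
        fun i => ((P1 (emb d) i + Pm1 (emb e) i : ℤ) : ℝ) / 2 with hmids
      have hQsum : ∀ z : Fin (m+1) → ℝ, (∑ i, Q i * z i) = ∑ j, (q' j : ℝ) * z j.castSucc := by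
        intro z
        rw [Fin.sum_univ_castSucc (f := fun i => Q i * z i)]
        rw [hQ]
        rw [show (Fin.snoc (fun j => (q' j : ℝ)) 0 : Fin (m+1) → ℝ) (Fin.last m) = 0 from
          Fin.snoc_last _ _]
        rw [zero_mul, add_zero]
        refine Finset.sum_congr rfl fun j _ => ?_
        rw [show (Fin.snoc (fun j => (q' j : ℝ)) 0 : Fin (m+1) → ℝ) j.castSucc = (q' j : ℝ) from
          Fin.snoc_castSucc _ _ _]
      have hlb : ((c₀ + ∑ i, Q i * mid i : ℝ) : EReal) ≤ localConvexExt f mid := by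
        apply lce_lower
        intro z hz
        have hzln : z ln = x₀ := by
          have hcl := hz ln
          rw [show mid ln = ((x₀ : ℤ) : ℝ) from by
            rw [hmids]
            simp only
            rw [hP1ln, hPm1ln]
            push_cast
            ring] at hcl
          exact int_close hcl
        have hzf : g (Fin.init z) ≤ f z := by
          have h1 : g (Fin.init z) ≤ H (Fin.snoc (Fin.init z) x₀) := iInf_le _ _
          rw [show Fin.snoc (Fin.init z) x₀ = z from by
            rw [← hzln, hln]
            exact Fin.snoc_init_self z, hH] at h1
          simp only at h1
          rw [hzln, pen_self, add_zero] at h1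
          exact h1
        have h2 := hq'at (fun j => Fin.init z j - x' j)
        rw [show (fun j => x' j + (Fin.init z j - x' j)) = Fin.init z from
          funext fun j => by ring] at h2
        have h3 := le_trans h2 hzf
        rw [show c₀ + ∑ i, Q i * ((z i : ℤ) : ℝ)
            = SD (fun j => Fin.init z j - x' j) + kxr from by
          rw [hQsum, hc₀]
          simp only [hSD]
          rw [show (∑ j, (q' j : ℝ) * (((Fin.init z j - x' j : ℤ)) : ℝ))
              = (∑ j, (q' j : ℝ) * ((Fin.init z j : ℤ) : ℝ))
                - ∑ j, (q' j : ℝ) * ((x' j : ℤ) : ℝ) from by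
            rw [← Finset.sum_sub_distrib]
            refine Finset.sum_congr rfl fun j _ => ?_
            push_cast
            ring]
          have : ∀ j ∈ Finset.univ, (q' j : ℝ) * ((z j.castSucc : ℤ) : ℝ)
              = (q' j : ℝ) * ((Fin.init z j : ℤ) : ℝ) := fun j _ => rfl
          rw [Finset.sum_congr rfl this]
          ring]
        exact h3
      have hmidval : c₀ + ∑ i, Q i * mid i = kxr + (SD (emb d) + SD (emb e)) / 2 := by
        rw [hQsum, hc₀]
        simp only [hSD]
        rw [show (∑ j, (q' j : ℝ) * mid j.castSucc)
            = (∑ j, (q' j : ℝ) * ((x' j : ℤ) : ℝ))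
              + ((∑ j, (q' j : ℝ) * ((emb d j : ℤ) : ℝ))
                + ∑ j, (q' j : ℝ) * ((emb e j : ℤ) : ℝ)) / 2 from by
          rw [← Finset.sum_add_distrib, Finset.sum_div, ← Finset.sum_add_distrib]
          refine Finset.sum_congr rfl fun j _ => ?_
          rw [hmids]
          simp only
          rw [hP1c, hPm1c]
          have : x' j = x j.castSucc := rfl
          rw [this]
          push_cast
          ring]
        ring
      rw [hmidval] at hlb
      have hcc := le_trans hlb hstep
      have h2c := coe_le_half hcc
      rw [show 2 * (kxr + (SD (emb d) + SD (emb e)) / 2)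
          = 2 * kxr + SD (emb d) + SD (emb e) by ring] at h2c
      rw [hLel, hUel]
      simp only
      rcases hZ (Pm1 (emb e)) with hv | ⟨k2, hv⟩
      · rw [hv]
        rw [show ((SD (emb e) + kxr : ℝ) : EReal) - ⊤ = ⊥ from by simp]
        exact bot_le
      · rcases hZ (P1 (emb d)) with hu | ⟨k1, hu⟩
        · rw [hu, EReal.top_add_of_ne_bot (EReal.coe_ne_bot _)]
          exact le_top
        · rw [hu, hv] at h2c
          have hre : 2 * kxr + SD (emb d) + SD (emb e) ≤ (k1 : ℝ) + (k2 : ℝ) := by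
            rw [← EReal.coe_add] at h2c
            exact_mod_cast h2c
          rw [hu, hv, ← EReal.coe_sub, ← EReal.coe_add]
          have : SD (emb e) + kxr - (k2:ℝ) ≤ (k1:ℝ) + (-kxr - SD (emb d)) := by linarith
          exact_mod_cast this
    set Uval : EReal := min (β ln) (Finset.univ.inf Uel) with hUval
    set Lval : EReal := max (α ln) (Finset.univ.sup Lel) with hLval
    have hLU : Lval ≤ Uval := by
      apply le_min
      · exact max_le (hαβ ln) (Finset.sup_le fun e _ => hLβ e)
      · apply Finset.le_inf
        intro d _
        exact max_le (hαU d) (Finset.sup_le fun e _ => hcross d e)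
    have hSDint : ∀ e : Fin m → Fin 3, SD (emb e) + kxr
        = (((∑ j, q' j * emb e j) + kx : ℤ) : ℝ) := by
      intro e
      rw [hSD, hkxr]
      push_cast
      ring
    have hPBL : PB Lval := by
      apply PB_sup
      · exact hα ln
      · apply Finset.sup_induction
        · exact Or.inl rfl
        · exact fun a1 p1 a2 p2 => PB_sup p1 p2
        · intro e _
          rw [hLel]
          simp only
          rcases hZ (Pm1 (emb e)) with h | ⟨k, h⟩
          · left
            rw [h]
            simp
          · right
            refine ⟨(∑ j, q' j * emb e j) + kx - k, ?_⟩
            rw [h, ← EReal.coe_sub]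
            congr 1
            rw [hSDint e]
            push_cast
            ring
    have hPTU : PT Uval := by
      apply PT_inf
      · exact hβ ln
      · apply Finset.inf_induction
        · exact Or.inl rfl
        · exact fun a1 p1 a2 p2 => PT_inf p1 p2
        · intro d _
          rw [hUel]
          simp only
          rcases hZ (P1 (emb d)) with h | ⟨k, h⟩
          · left
            rw [h, EReal.top_add_of_ne_bot (EReal.coe_ne_bot _)]
          · right
            refine ⟨k - ((∑ j, q' j * emb d j) + kx), ?_⟩
            rw [h, ← EReal.coe_add]
            congr 1
            have : -kxr - SD (emb d) = -((∑ j, q' j * emb d j : ℤ) + (kx:ℤ) : ℝ) := by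
              have := hSDint d
              push_cast at this ⊢
              linarith
            rw [this]
            push_cast
            ring
    obtain ⟨qn, hqnL, hqnU⟩ := exists_int_between hPBL hPTU hLU
    set q : Fin (m+1) → ℤ := Fin.snoc q' qn with hq
    have hqc : ∀ j : Fin m, q j.castSucc = q' j := fun j => Fin.snoc_castSucc _ _ _
    have hqln : q ln = qn := by rw [hq, hln]; exact Fin.snoc_last _ _
    have hqloc : ∀ y : Fin (m+1) → ℤ, (∀ i, (y i - x i).natAbs ≤ 1) →
        (((∑ i, (q i : ℝ) * ((y i - x i : ℤ) : ℝ)) : ℝ) : EReal) + f x ≤ f y := by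
      intro y hy
      obtain ⟨d, hd⟩ := emb_surj (fun j => y j.castSucc - x j.castSucc)
        (fun j => hy j.castSucc)
      have hsum : (∑ i, (q i : ℝ) * ((y i - x i : ℤ) : ℝ))
          = SD (emb d) + (qn : ℝ) * ((y ln - x₀ : ℤ) : ℝ) := by
        rw [Fin.sum_univ_castSucc (f := fun i => (q i : ℝ) * ((y i - x i : ℤ) : ℝ))]
        congr 1
        · rw [hSD]
          refine Finset.sum_congr rfl fun j _ => ?_
          rw [hqc j]
          congr 2
          have := congrFun hd j
          rw [this]
        · rw [show (Fin.last m) = ln from hln.symm, hqln, hx₀]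
      have hylast : (y ln - x₀).natAbs ≤ 1 := by
        rw [hx₀]
        exact hy ln
      rw [hfx, hsum]
      have htri : y ln - x₀ = 0 ∨ y ln - x₀ = 1 ∨ y ln - x₀ = -1 := by omega
      rcases htri with h0 | h1 | hm1
      · have hyz : y ln = x₀ := by omega
        have hgf : g (Fin.init y) ≤ f y := by
          have h1 : g (Fin.init y) ≤ H (Fin.snoc (Fin.init y) x₀) := iInf_le _ _
          rw [show Fin.snoc (Fin.init y) x₀ = y from by
            rw [← hyz, hln]
            exact Fin.snoc_init_self y, hH] at h1
          simp only at h1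
          rw [hyz, pen_self, add_zero] at h1
          exact h1
        have h2 := hq'at (fun j => Fin.init y j - x' j)
        rw [show (fun j => x' j + (Fin.init y j - x' j)) = Fin.init y from
          funext fun j => by ring] at h2
        have hSDeq : SD (emb d) = SD (fun j => Fin.init y j - x' j) := by
          rw [hd]
          rfl
        rw [h0]
        rw [show (qn : ℝ) * (((0:ℤ)) : ℝ) = 0 by norm_num, add_zero]
        rw [← EReal.coe_add]
        calc ((SD (emb d) + kxr : ℝ) : EReal)
            = ((SD (fun j => Fin.init y j - x' j) + kxr : ℝ) : EReal) := by rw [hSDeq]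
          _ ≤ g (Fin.init y) := h2
          _ ≤ f y := hgf
      · have hyeq : y = P1 (emb d) := by
          funext i
          refine Fin.lastCases ?_ (fun j => ?_) i
          · rw [show (Fin.last m) = ln from hln.symm, hP1ln]
            omega
          · rw [hP1c]
            have := congrFun hd j
            rw [this]
            ring
        have hUle : ((qn : ℝ) : EReal) ≤ Uel d :=
          le_trans hqnU (le_trans (min_le_right _ _) (Finset.inf_le (Finset.mem_univ d)))
        rw [hUel] at hUle
        simp only at hUle
        have h2 := le_add_coe_iff.mp hUle
        rw [← EReal.coe_add] at h2
        rw [h1, hyeq]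
        rw [show (qn : ℝ) * (((1:ℤ)) : ℝ) = (qn:ℝ) by norm_num]
        rw [← EReal.coe_add]
        rw [show SD (emb d) + (qn:ℝ) + kxr = (qn:ℝ) + -(-kxr - SD (emb d)) by ring]
        exact h2
      · have hyeq : y = Pm1 (emb d) := by
          funext i
          refine Fin.lastCases ?_ (fun j => ?_) i
          · rw [show (Fin.last m) = ln from hln.symm, hPm1ln]
            omega
          · rw [hPm1c]
            have := congrFun hd j
            rw [this]
            ring
        have hLle : Lel d ≤ ((qn : ℝ) : EReal) :=
          le_trans (le_trans (Finset.le_sup (Finset.mem_univ d)) (le_max_right _ _)) hqnL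
        rw [hLel] at hLle
        simp only at hLle
        rw [hm1, hyeq]
        rcases hZ (Pm1 (emb d)) with h | ⟨k, h⟩
        · rw [h]
          exact le_top
        · rw [h, ← EReal.coe_sub] at hLle
          have hre : SD (emb d) + kxr - (k:ℝ) ≤ (qn:ℝ) := by exact_mod_cast hLle
          rw [h, ← EReal.coe_add]
          have : SD (emb d) + (qn:ℝ) * (((-1:ℤ)) : ℝ) + kxr ≤ (k:ℝ) := by
            push_cast
            linarith
          exact_mod_cast this
    have hglob := local_to_global f hZ hmid x kxr hfx (fun i => (q i : ℝ)) hqloc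
    refine ⟨q, hglob, fun i => ?_⟩
    refine Fin.lastCases ?_ (fun j => ?_) i
    · rw [show (Fin.last m) = ln from hln.symm, hqln]
      constructor
      · exact le_trans (le_max_left _ _) hqnL
      · exact le_trans hqnU (min_le_left _ _)
    · rw [hqc j]
      exact hq'b j

end IBS

/-- **Integral boxed subdifferentiability.**  For an integer-valued
integrally convex f : ℤⁿ → ℤ ∪ {+∞}, x ∈ dom f, and an integral box
B = [α, β] (entries of α in ℤ ∪ {−∞}, of β in ℤ ∪ {+∞}, α ≤ β):
if ∂f(x) ∩ B ≠ ∅ then ∂f(x) ∩ B contains an integer vector. -/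
theorem integral_boxed_subdifferentiability (n : ℕ)
    (f : (Fin n → ℤ) → EReal)
    (hZ : ∀ z, f z = ⊤ ∨ ∃ m : ℤ, f z = ((m : ℝ) : EReal))
    (hf : IntegrallyConvexFn f) (x : Fin n → ℤ) (hx : f x ≠ ⊤)
    (α β : Fin n → EReal)
    (hα : ∀ i, α i = ⊥ ∨ ∃ m : ℤ, α i = ((m : ℝ) : EReal))
    (hβ : ∀ i, β i = ⊤ ∨ ∃ m : ℤ, β i = ((m : ℝ) : EReal))
    (hαβ : ∀ i, α i ≤ β i)
    (hne : ∃ p : Fin n → ℝ,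
      (∀ y : Fin n → ℤ,
        (((∑ i, p i * ((y i - x i : ℤ) : ℝ)) : ℝ) : EReal) + f x ≤ f y) ∧
      (∀ i, α i ≤ ((p i : ℝ) : EReal) ∧ ((p i : ℝ) : EReal) ≤ β i)) :
    ∃ q : Fin n → ℤ,
      (∀ y : Fin n → ℤ,
        (((∑ i, (q i : ℝ) * ((y i - x i : ℤ) : ℝ)) : ℝ) : EReal) + f x ≤ f y) ∧
      (∀ i, α i ≤ (((q i : ℤ) : ℝ) : EReal) ∧ (((q i : ℤ) : ℝ) : EReal) ≤ β i) := by
  obtain ⟨p, hp, hpbox⟩ := hne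
  rcases hZ x with h | ⟨kx, hkx⟩
  · exact absurd h hx
  · exact IBS.main_ind n f hZ hf.2 x kx hkx α β hα hβ hαβ p hp hpbox
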